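/- Let G be a graph of diameter two with fewer lines than vertices, x a vertex with d₂(x) ≥ 2, and suppose the sets of lines L₁ = {line(x,a) : a ∈ N(x)} and L₂ = {line(x,b) : b ∈ N²(x)} are disjoint. Then |L₁| < |N(x)|, i.e., there exist distinct a, a' ∈ N(x) with line(x,a) = line(x,a'). -/

import Mathlib

open scoped Classical

namespace ChenChvatal

variable {V : Type*}

/-- `G` has diameter exactly two: some pair of distinct vertices is non-adjacent,
and any two distinct non-adjacent vertices have a common neighbor. -/
def DiamTwo (G : SimpleGraph V) : Prop :=
  (∃ x y : V, x ≠ y ∧ ¬ G.Adj x y) ∧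
    ∀ x y : V, x ≠ y → ¬ G.Adj x y → ∃ z, G.Adj x z ∧ G.Adj z y

/-- The line of a diameter-two graph defined by two vertices. -/
noncomputable def line (G : SimpleGraph V) (x y : V) : Set V :=
  if G.Adj x y then {x, y} ∪ symmDiff (G.neighborSet x) (G.neighborSet y)
  else {x, y} ∪ (G.neighborSet x ∩ G.neighborSet y)

/-- The set of all lines of a graph. -/
def lines (G : SimpleGraph V) : Set (Set V) :=
  {ℓ | ∃ x y : V, x ≠ y ∧ ℓ = line G x y}

/-- The set of non-neighbors of `x`, other than `x` itself. -/
def N2 (G : SimpleGraph V) (x : V) : Set V := {u | u ≠ x ∧ ¬ G.Adj x u}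

/-- If `G` has fewer lines than vertices, `d₂(x) ≥ 2` and the families
`L₁ = {line(x,a) : a ∈ N(x)}` and `L₂ = {line(x,b) : b ∈ N²(x)}` are disjoint,
then `|L₁| < |N(x)|`, i.e. two distinct neighbors of `x` define the same line with `x`. -/
lemma left_mem_line (G : SimpleGraph V) (x y : V) : x ∈ line G x y := by
  unfold line; split <;> exact Or.inl (Or.inl rfl)

lemma line_inter_N2 (G : SimpleGraph V) {x b : V} (hb : b ∈ N2 G x) :
    line G x b ∩ N2 G x = {b} := by
  obtain ⟨hbx, hnadj⟩ := hb
  unfold line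
  rw [if_neg hnadj]
  ext u
  constructor
  · rintro ⟨hu1, hux, hnadju⟩
    rcases hu1 with (rfl | rfl) | ⟨hu, _⟩
    · exact absurd rfl hux
    · rfl
    · exact absurd hu hnadju
  · rintro rfl
    exact ⟨Or.inl (Or.inr rfl), hbx, hnadj⟩

lemma line_injOn_N2 (G : SimpleGraph V) (x : V) :
    Set.InjOn (line G x) (N2 G x) := by
  intro b hb b' hb' heq
  have h1 := line_inter_N2 G hb
  have h2 := line_inter_N2 G hb'
  rw [heq, h2] at h1
  exact (Set.singleton_eq_singleton_iff.mp h1.symm)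

lemma x_not_mem_line_N2 (G : SimpleGraph V) {x b b' : V}
    (hb : b ∈ N2 G x) (hb' : b' ∈ N2 G x) : x ∉ line G b b' := by
  obtain ⟨hbx, hnb⟩ := hb
  obtain ⟨hb'x, hnb'⟩ := hb'
  have hxb : x ∉ G.neighborSet b := fun h => hnb (G.adj_symm h)
  have hxb' : x ∉ G.neighborSet b' := fun h => hnb' (G.adj_symm h)
  unfold line
  split
  · rintro ((rfl | rfl) | h)
    · exact hbx rfl
    · exact hb'x rfl
    · rcases h with ⟨h, _⟩ | ⟨h, _⟩
      · exact hxb h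
      · exact hxb' h
  · rintro ((rfl | rfl) | ⟨h, _⟩)
    · exact hbx rfl
    · exact hb'x rfl
    · exact hxb h

theorem stmt15 [Fintype V] (G : SimpleGraph V) (hG : DiamTwo G)
    (hfew : (lines G).ncard < Fintype.card V) (x : V)
    (hd2 : 2 ≤ (N2 G x).ncard)
    (hdisj : Disjoint {ℓ : Set V | ∃ a ∈ G.neighborSet x, ℓ = line G x a}
                      {ℓ : Set V | ∃ b ∈ N2 G x, ℓ = line G x b}) :
    {ℓ : Set V | ∃ a ∈ G.neighborSet x, ℓ = line G x a}.ncard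
        < (G.neighborSet x).ncard ∧
      ∃ a a' : V, a ≠ a' ∧ G.Adj x a ∧ G.Adj x a' ∧ line G x a = line G x a' := by
  classical
  set L1 : Set (Set V) := {ℓ | ∃ a ∈ G.neighborSet x, ℓ = line G x a} with hL1def
  set L2 : Set (Set V) := {ℓ | ∃ b ∈ N2 G x, ℓ = line G x b} with hL2def
  -- L1 and L2 as images
  have hL1img : L1 = (line G x) '' (G.neighborSet x) := by
    ext ℓ; constructor
    · rintro ⟨a, ha, rfl⟩; exact ⟨a, ha, rfl⟩
    · rintro ⟨a, ha, rfl⟩; exact ⟨a, ha, rfl⟩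
  have hL2img : L2 = (line G x) '' (N2 G x) := by
    ext ℓ; constructor
    · rintro ⟨b, hb, rfl⟩; exact ⟨b, hb, rfl⟩
    · rintro ⟨b, hb, rfl⟩; exact ⟨b, hb, rfl⟩
  have hL2card : L2.ncard = (N2 G x).ncard := by
    rw [hL2img, Set.ncard_image_of_injOn (line_injOn_N2 G x)]
  -- pick two distinct elements of N2
  obtain ⟨b, b', hb, hb', hbb'⟩ := (Set.one_lt_ncard_iff (N2 G x).toFinite).mp (by omega : 1 < (N2 G x).ncard)
  -- the extra line
  set ℓ0 : Set V := line G b b' with hℓ0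
  have hℓ0lines : ℓ0 ∈ lines G := ⟨b, b', hbb', rfl⟩
  have hxℓ0 : x ∉ ℓ0 := x_not_mem_line_N2 G hb hb'
  have hℓ0L1 : ℓ0 ∉ L1 := by
    rintro ⟨a, _, ha⟩; exact hxℓ0 (ha ▸ left_mem_line G x a)
  have hℓ0L2 : ℓ0 ∉ L2 := by
    rintro ⟨c, _, hc⟩; exact hxℓ0 (hc ▸ left_mem_line G x c)
  -- subset of lines
  have hsub : L1 ∪ L2 ∪ {ℓ0} ⊆ lines G := by
    rintro ℓ ((⟨a, ha, rfl⟩ | ⟨c, hc, rfl⟩) | hℓ)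
    · exact ⟨x, a, G.ne_of_adj ha, rfl⟩
    · exact ⟨x, c, Ne.symm hc.1, rfl⟩
    · rw [Set.mem_singleton_iff.mp hℓ]; exact hℓ0lines
  have hfin : ∀ s : Set (Set V), s.Finite := fun s => s.toFinite
  have hcard_union : (L1 ∪ L2 ∪ {ℓ0}).ncard = L1.ncard + L2.ncard + 1 := by
    rw [Set.ncard_union_eq (by
        rw [Set.disjoint_singleton_right]
        rintro (h | h); exacts [hℓ0L1 h, hℓ0L2 h]) (hfin _) (hfin _),
      Set.ncard_union_eq hdisj (hfin _) (hfin _), Set.ncard_singleton]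
  have hlinesge : L1.ncard + L2.ncard + 1 ≤ (lines G).ncard := by
    rw [← hcard_union]
    exact Set.ncard_le_ncard hsub (hfin _)
  -- partition of V
  have hpart : (Fintype.card V) = 1 + (G.neighborSet x).ncard + (N2 G x).ncard := by
    have huniv : (Set.univ : Set V) = ({x} ∪ G.neighborSet x) ∪ N2 G x := by
      ext u
      simp only [Set.mem_univ, Set.mem_union, Set.mem_singleton_iff,
        SimpleGraph.mem_neighborSet, N2, Set.mem_setOf_eq, true_iff]
      by_cases h1 : u = x
      · exact Or.inl (Or.inl h1)
      · by_cases h2 : G.Adj x u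
        · exact Or.inl (Or.inr h2)
        · exact Or.inr ⟨h1, h2⟩
    have hd1 : Disjoint ({x} : Set V) (G.neighborSet x) := by
      rw [Set.disjoint_singleton_left]
      exact fun h => G.loopless.irrefl x h
    have hd2' : Disjoint ({x} ∪ G.neighborSet x) (N2 G x) := by
      rw [Set.disjoint_union_left]
      constructor
      · rw [Set.disjoint_singleton_left]; exact fun h => h.1 rfl
      · rw [Set.disjoint_left]; exact fun u hu h2 => h2.2 hu
    have := Set.ncard_univ V
    rw [huniv] at this
    rw [Set.ncard_union_eq hd2' (Set.toFinite _) (Set.toFinite _),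
      Set.ncard_union_eq hd1 (Set.toFinite _) (Set.toFinite _),
      Set.ncard_singleton] at this
    rw [← Nat.card_eq_fintype_card, ← this]
  have hL1lt : L1.ncard < (G.neighborSet x).ncard := by omega
  refine ⟨hL1lt, ?_⟩
  by_contra h
  push_neg at h
  have hinj : Set.InjOn (line G x) (G.neighborSet x) := by
    intro a ha a' ha' heq
    by_contra hne
    exact h a a' hne ha ha' heq
  rw [hL1img, Set.ncard_image_of_injOn hinj] at hL1lt
  omega

end ChenChvatal
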